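/- In the lower-bound construction, if the union C of all coresets satisfies E[|C ∩ M_{ĀB̄}|] ≤ n/(4α) and every matching in C has size at most |C ∩ M_{ĀB̄}| + 2·n_{AB} with 2·n_{AB} ≤ n/(4α), then the expected maximum matching size in C is less than n/(2α), while the graph has a matching of size at least n/2; hence C is not an α-approximate coreset. -/

import Mathlib

open MeasureTheory

/-- in the lower-bound construction, if `E[|C ∩ M_{ĀB̄}|] ≤ n/(4α)` (random
variable `X`), every matching in `C` has size at most `|C ∩ M_{ĀB̄}| + 2·n_AB` (random
variable `Y` for the maximum matching size in `C`) with `2·n_AB < n/(4α)`, and the graph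
has a matching of size at least `n/2` (`optG ≥ n/2`), then `E[Y] < n/(2α)` and in
particular `C` is not an `α`-approximate coreset, i.e. `¬(α·E[Y] ≥ optG)`. -/
theorem coreset_lower_bound_contradiction
    {Ω : Type*} [MeasurableSpace Ω] (μ : Measure Ω) [IsProbabilityMeasure μ]
    (X Y : Ω → ℝ) (α n nAB optG : ℝ)
    (hα : 1 ≤ α) (hn : 0 < n) (hnAB : 0 ≤ nAB)
    (hX : Integrable X μ) (hY : Integrable Y μ)
    (hEX : ∫ ω, X ω ∂μ ≤ n / (4 * α))
    (hpt : ∀ ω, Y ω ≤ X ω + 2 * nAB)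
    (hsmall : 2 * nAB < n / (4 * α))
    (hoptG : n / 2 ≤ optG) :
    (∫ ω, Y ω ∂μ) < n / (2 * α) ∧ ¬ (optG ≤ α * ∫ ω, Y ω ∂μ) := by
  have hα0 : (0:ℝ) < α := lt_of_lt_of_le one_pos hα
  have h1 : ∫ ω, Y ω ∂μ ≤ ∫ ω, X ω + 2 * nAB ∂μ :=
    integral_mono hY (hX.add (integrable_const _)) hpt
  have h2 : ∫ ω, X ω + 2 * nAB ∂μ = (∫ ω, X ω ∂μ) + 2 * nAB := by
    rw [integral_add hX (integrable_const _), integral_const]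
    simp
  have hEY : ∫ ω, Y ω ∂μ < n / (2 * α) := by
    have : (∫ ω, Y ω ∂μ) < n / (4 * α) + n / (4 * α) := by
      calc ∫ ω, Y ω ∂μ ≤ (∫ ω, X ω ∂μ) + 2 * nAB := by rw [← h2]; exact h1
        _ < n / (4 * α) + n / (4 * α) := add_lt_add_of_le_of_lt hEX hsmall
    calc ∫ ω, Y ω ∂μ < n / (4 * α) + n / (4 * α) := this
      _ = n / (2 * α) := by field_simp; ring
  refine ⟨hEY, fun h => ?_⟩
  have : α * ∫ ω, Y ω ∂μ < α * (n / (2 * α)) :=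
    (mul_lt_mul_iff_right₀ hα0).mpr hEY
  have h3 : α * (n / (2 * α)) = n / 2 := by field_simp
  linarith
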